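/- Let A be a real m×d matrix, y ∈ ℝ^m, α > 0 and t ∈ (0,1). Let σ_m, σ_M ≥ 0 satisfy σ_m‖z‖₂ ≤ ‖A z‖₂ ≤ σ_M‖z‖₂ for all z ∈ ℝ^d (the smallest and largest singular values of A), and set θ = (σ_m² + σ_M²)/2. Then the map T_t : ℝ^d → ℝ^d defined by T_t(z) = (θ t + (1−t)α)⁻¹ · S_{1−t}( t(θ I − AᵀA) z + t Aᵀ y ) is Lipschitz with constant L = t(σ_M² − σ_m²) / ( t(σ_M² + σ_m²) + 2α(1−t) ), and L < 1, i.e., T_t is a contraction. -/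

import Mathlib

open Matrix

open scoped RealInnerProductSpace

-- soft threshold as clamp
lemma soft_eq_clamp (c : ℝ) (hc : 0 ≤ c) (u : ℝ) :
    Real.sign u * max (|u| - c) 0 = u - min (max u (-c)) c := by
  rcases lt_trichotomy u 0 with h | h | h
  · rw [Real.sign_of_neg h, abs_of_neg h]
    simp only [max_def, min_def]; split_ifs <;> linarith
  · subst h
    simp only [Real.sign_zero, zero_mul, max_def, min_def]
    split_ifs <;> linarith
  · rw [Real.sign_of_pos h, abs_of_pos h]
    simp only [max_def, min_def]; split_ifs <;> linarith

lemma soft_lip (c : ℝ) (hc : 0 ≤ c) (a b : ℝ) :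
    |Real.sign a * max (|a| - c) 0 - Real.sign b * max (|b| - c) 0| ≤ |a - b| := by
  rw [soft_eq_clamp c hc a, soft_eq_clamp c hc b]
  rcases abs_cases (a - b) with ⟨h1, h2⟩ | ⟨h1, h2⟩ <;>
  · rw [h1, abs_le]
    constructor <;>
    · simp only [max_def, min_def]; split_ifs <;> linarith

lemma enorm_mono {n : ℕ} (x y : EuclideanSpace ℝ (Fin n)) (h : ∀ i, |x i| ≤ |y i|) :
    ‖x‖ ≤ ‖y‖ := by
  rw [EuclideanSpace.norm_eq, EuclideanSpace.norm_eq]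
  apply Real.sqrt_le_sqrt
  apply Finset.sum_le_sum
  intro i _
  have := h i
  simp only [Real.norm_eq_abs]
  nlinarith [abs_nonneg (x i)]

lemma sym_op_bound {E : Type*} [NormedAddCommGroup E] [InnerProductSpace ℝ E]
    (U : E →ₗ[ℝ] E) (hsym : ∀ x y : E, ⟪U x, y⟫ = ⟪x, U y⟫) (c : ℝ) (hc : 0 ≤ c)
    (hq : ∀ x : E, |⟪U x, x⟫| ≤ c * ‖x‖ ^ 2) (x : E) : ‖U x‖ ≤ c * ‖x‖ := by
  by_cases hUx : U x = 0
  · rw [hUx, norm_zero]; positivity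
  have hx : x ≠ 0 := by rintro rfl; simp at hUx
  have hUxpos : 0 < ‖U x‖ := norm_pos_iff.2 hUx
  have hxpos : 0 < ‖x‖ := norm_pos_iff.2 hx
  set y : E := (‖x‖ / ‖U x‖) • U x with hy
  have hyn : ‖y‖ = ‖x‖ := by
    rw [hy, norm_smul, Real.norm_eq_abs, abs_of_nonneg (by positivity),
      div_mul_cancel₀ _ (ne_of_gt hUxpos)]
  have hinner : ⟪U x, y⟫ = ‖x‖ * ‖U x‖ := by
    rw [hy, real_inner_smul_right, real_inner_self_eq_norm_sq]
    field_simp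
  have hpol : 4 * ⟪U x, y⟫ = ⟪U (x + y), x + y⟫ - ⟪U (x - y), x - y⟫ := by
    have h1 := hsym x y
    have h2 := real_inner_comm (U y) x
    have h3 := real_inner_comm x (U y)
    simp only [map_add, map_sub, inner_add_left, inner_add_right, inner_sub_left,
      inner_sub_right]
    linarith [real_inner_comm (U x) y]
  have hpar : ‖x + y‖ ^ 2 + ‖x - y‖ ^ 2 = 2 * (‖x‖ ^ 2 + ‖y‖ ^ 2) := by
    have := parallelogram_law_with_norm ℝ x y
    nlinarith [this]
  have h1 : ⟪U (x + y), x + y⟫ ≤ c * ‖x + y‖ ^ 2 := (abs_le.1 (hq _)).2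
  have h2 : -(c * ‖x - y‖ ^ 2) ≤ ⟪U (x - y), x - y⟫ := (abs_le.1 (hq _)).1
  have hpar1 : c * (‖x + y‖ ^ 2 + ‖x - y‖ ^ 2) = c * (2 * (‖x‖ ^ 2 + ‖y‖ ^ 2)) := by
    rw [hpar]
  have hyn2 : c * ‖y‖ ^ 2 = c * ‖x‖ ^ 2 := by rw [hyn]
  have key : ‖x‖ * ‖U x‖ ≤ c * ‖x‖ ^ 2 := by linarith [hinner, hpol, h1, h2, hpar1, hyn2]
  calc ‖U x‖ = ‖x‖ * ‖U x‖ / ‖x‖ := by field_simp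
    _ ≤ c * ‖x‖ ^ 2 / ‖x‖ := by gcongr
    _ = c * ‖x‖ := by field_simp

set_option maxHeartbeats 1000000 in
/-- Lemma 2.6 (contraction): the soft-thresholding fixed-point map
`T_t(z) = (θt + (1-t)α)⁻¹ S_{1-t}(t(θI - AᵀA)z + tAᵀy)` is Lipschitz with constant
`L = t(σ_M² - σ_m²)/(t(σ_M² + σ_m²) + 2α(1-t)) < 1`. -/
theorem elasticNet_thresholding_map_contraction {m d : ℕ}
    (A : Matrix (Fin m) (Fin d) ℝ) (y : EuclideanSpace ℝ (Fin m))
    (α t σm σM : ℝ) (hα : 0 < α) (ht0 : 0 < t) (ht1 : t < 1)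
    (hσm : 0 ≤ σm) (hσM : 0 ≤ σM)
    (hlow : ∀ z : EuclideanSpace ℝ (Fin d), σm * ‖z‖ ≤ ‖Matrix.toEuclideanLin A z‖)
    (hhigh : ∀ z : EuclideanSpace ℝ (Fin d), ‖Matrix.toEuclideanLin A z‖ ≤ σM * ‖z‖)
    (θ : ℝ) (hθ : θ = (σm ^ 2 + σM ^ 2) / 2)
    (T : EuclideanSpace ℝ (Fin d) → EuclideanSpace ℝ (Fin d))
    (hT : ∀ z i, T z i = (θ * t + (1 - t) * α)⁻¹ *
      (Real.sign (t * (θ * z i - (Aᵀ * A).mulVec (fun k => z k) i) + t * Aᵀ.mulVec (fun k => y k) i) *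
        max (|t * (θ * z i - (Aᵀ * A).mulVec (fun k => z k) i) + t * Aᵀ.mulVec (fun k => y k) i| - (1 - t) / 2) 0))
    (L : ℝ) (hL : L = t * (σM ^ 2 - σm ^ 2) / (t * (σM ^ 2 + σm ^ 2) + 2 * α * (1 - t))) :
    (∀ z w : EuclideanSpace ℝ (Fin d), ‖T z - T w‖ ≤ L * ‖z - w‖) ∧ L < 1 := by
  have hdenom : 0 < t * (σM ^ 2 + σm ^ 2) + 2 * α * (1 - t) := by nlinarith [sq_nonneg σm, sq_nonneg σM]
  have hL1 : L < 1 := by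
    rw [hL, div_lt_one hdenom]
    nlinarith [sq_nonneg σm]
  refine ⟨?_, hL1⟩
  intro z w
  rcases Nat.eq_zero_or_pos d with hd | hd
  · subst hd
    have hzw : z = w := Subsingleton.elim z w
    subst hzw
    simp
  -- d > 0 : get σm ≤ σM
  have hσle : σm ≤ σM := by
    set e : EuclideanSpace ℝ (Fin d) := EuclideanSpace.single (⟨0, hd⟩ : Fin d) (1 : ℝ)
    have he : ‖e‖ = 1 := by simp [e, EuclideanSpace.norm_single]
    have h1 := hlow e
    have h2 := hhigh e
    rw [he] at h1 h2
    linarith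
  have hσsq : σm ^ 2 ≤ σM ^ 2 := by nlinarith
  set c' : ℝ := (σM ^ 2 - σm ^ 2) / 2 with hc'def
  have hc' : 0 ≤ c' := by rw [hc'def]; linarith
  set c0 : ℝ := θ * t + (1 - t) * α with hc0def
  have hθ0 : 0 ≤ θ := by rw [hθ]; positivity
  have hc0 : 0 < c0 := by rw [hc0def]; nlinarith
  set U : EuclideanSpace ℝ (Fin d) →ₗ[ℝ] EuclideanSpace ℝ (Fin d) :=
    θ • LinearMap.id - Matrix.toEuclideanLin (Aᵀ * A) with hU
  have hAH : Aᴴ = Aᵀ := by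
    ext i j; simp [Matrix.conjTranspose_apply]
  have hAtA : ∀ x u : EuclideanSpace ℝ (Fin d),
      ⟪Matrix.toEuclideanLin (Aᵀ * A) x, u⟫ = ⟪Matrix.toEuclideanLin A x, Matrix.toEuclideanLin A u⟫ := by
    intro x u
    have hmul : Matrix.toEuclideanLin (Aᵀ * A) x = Matrix.toEuclideanLin Aᵀ (Matrix.toEuclideanLin A x) := by
      simp [Matrix.toEuclideanLin_apply, Matrix.mulVec_mulVec]
    rw [hmul, ← hAH, Matrix.toEuclideanLin_conjTranspose_eq_adjoint, LinearMap.adjoint_inner_left]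
  have hsym : ∀ x u : EuclideanSpace ℝ (Fin d), ⟪U x, u⟫ = ⟪x, U u⟫ := by
    intro x u
    simp only [hU, LinearMap.sub_apply, LinearMap.smul_apply, LinearMap.id_apply,
      inner_sub_left, inner_sub_right, real_inner_smul_left, real_inner_smul_right]
    linarith [hAtA x u, hAtA u x,
      real_inner_comm x (Matrix.toEuclideanLin (Aᵀ * A) u),
      real_inner_comm (Matrix.toEuclideanLin A u) (Matrix.toEuclideanLin A x)]
  have hq : ∀ x : EuclideanSpace ℝ (Fin d), |⟪U x, x⟫| ≤ c' * ‖x‖ ^ 2 := by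
    intro x
    have hinner : ⟪U x, x⟫ = θ * ‖x‖ ^ 2 - ‖Matrix.toEuclideanLin A x‖ ^ 2 := by
      simp only [hU, LinearMap.sub_apply, LinearMap.smul_apply, LinearMap.id_apply,
        inner_sub_left, real_inner_smul_left]
      rw [hAtA x x, real_inner_self_eq_norm_sq, real_inner_self_eq_norm_sq]
    rw [hinner, hθ, hc'def, abs_le]
    have h1 := hlow x
    have h2 := hhigh x
    constructor <;> nlinarith [norm_nonneg x, norm_nonneg (Matrix.toEuclideanLin A x),
      mul_nonneg hσm (norm_nonneg x), mul_nonneg hσM (norm_nonneg x)]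
  set v : EuclideanSpace ℝ (Fin d) := z - w with hv
  have hcomp : ∀ i, U v i = θ * v i - (Aᵀ * A).mulVec (fun k => v k) i := by
    intro i
    simp only [hU, LinearMap.sub_apply, LinearMap.smul_apply, LinearMap.id_apply,
      PiLp.sub_apply, PiLp.smul_apply, smul_eq_mul, Matrix.toEuclideanLin_apply]
  have habs : ∀ i, |T z i - T w i| ≤ c0⁻¹ * t * |U v i| := by
    intro i
    rw [hT z i, hT w i]
    set a : ℝ := t * (θ * z i - (Aᵀ * A).mulVec (fun k => z k) i) + t * Aᵀ.mulVec (fun k => y k) i with ha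
    set b : ℝ := t * (θ * w i - (Aᵀ * A).mulVec (fun k => w k) i) + t * Aᵀ.mulVec (fun k => y k) i with hb
    have hdiff : a - b = t * U v i := by
      rw [hcomp i, ha, hb]
      have hvk : (fun k => v k) = (fun k => z k) - fun k => w k := by
        funext k; simp [hv]
      rw [hvk, Matrix.mulVec_sub, Pi.sub_apply]
      have hvi : v i = z i - w i := by simp [hv]
      rw [hvi]
      ring
    have hc1 : (0:ℝ) ≤ (1 - t) / 2 := by linarith
    calc |c0⁻¹ * (Real.sign a * max (|a| - (1 - t) / 2) 0) -
            c0⁻¹ * (Real.sign b * max (|b| - (1 - t) / 2) 0)|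
        = c0⁻¹ * |Real.sign a * max (|a| - (1 - t) / 2) 0 -
            Real.sign b * max (|b| - (1 - t) / 2) 0| := by
          rw [← mul_sub, abs_mul, abs_of_nonneg (by positivity : (0:ℝ) ≤ c0⁻¹)]
      _ ≤ c0⁻¹ * |a - b| := by
          have := soft_lip ((1 - t) / 2) hc1 a b
          gcongr
      _ = c0⁻¹ * t * |U v i| := by
          rw [hdiff, abs_mul, abs_of_pos ht0]; ring
  have step1 : ‖T z - T w‖ ≤ ‖(c0⁻¹ * t) • U v‖ := by
    apply enorm_mono
    intro i
    rw [PiLp.sub_apply, PiLp.smul_apply, smul_eq_mul, abs_mul, abs_of_nonneg (by positivity : (0:ℝ) ≤ c0⁻¹ * t)]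
    exact habs i
  have step2 : ‖(c0⁻¹ * t) • U v‖ = c0⁻¹ * t * ‖U v‖ := by
    rw [norm_smul, Real.norm_eq_abs, abs_of_nonneg (by positivity)]
  have step3 : ‖U v‖ ≤ c' * ‖v‖ := sym_op_bound U hsym c' hc' hq v
  have hmul : t * c' = L * c0 := by
    rw [hL, hc0def, hθ, hc'def]
    field_simp [hdenom.ne']
    ring
  have hLeq : c0⁻¹ * t * c' = L := by
    rw [mul_assoc, hmul, mul_comm L c0, ← mul_assoc, inv_mul_cancel₀ hc0.ne', one_mul]
  calc ‖T z - T w‖ ≤ c0⁻¹ * t * ‖U v‖ := step1.trans_eq step2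
    _ ≤ c0⁻¹ * t * (c' * ‖v‖) := by
        have : (0:ℝ) ≤ c0⁻¹ * t := by positivity
        exact mul_le_mul_of_nonneg_left step3 this
    _ = (c0⁻¹ * t * c') * ‖v‖ := by ring
    _ = L * ‖z - w‖ := by rw [hLeq]
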